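/- For k = 2 and the Laplace transform M(s) = 1/(s^(α+1)(Log s)³), the residue of e^(st) M(s) at s = 1 equals (e^t/2) ( t² − (2α−1) t + α² ). -/

import Mathlib

open Filter Topology

section VolterraAux
open Complex

private lemma analyticAt_deriv' {f : ℂ → ℂ} {x : ℂ} (h : AnalyticAt ℂ f x) :
    AnalyticAt ℂ (deriv f) x :=
  (AnalyticOnNhd.deriv_of_isOpen (fun _ hy => hy) (isOpen_analyticAt ℂ f)) x h

noncomputable def vdd : ℂ → ℂ := dslope Complex.log 1

lemma vdd_an : AnalyticAt ℂ vdd 1 := by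
  obtain ⟨p, hp⟩ := analyticAt_clog one_mem_slitPlane
  exact ⟨p.fslope, hp.has_fpower_series_dslope_fslope⟩

lemma vdd_eq (z : ℂ) : (z - 1) * vdd z = Complex.log z := by
  have h := sub_smul_dslope Complex.log 1 z
  simpa [vdd, smul_eq_mul, Complex.log_one] using h

lemma vdd_one : vdd 1 = 1 := by
  rw [vdd, dslope_same]
  simpa using (Complex.hasDerivAt_log one_mem_slitPlane).deriv

lemma vdd_ev : ∀ᶠ z in 𝓝 (1 : ℂ),
    AnalyticAt ℂ vdd z ∧ z ∈ Complex.slitPlane ∧ vdd z ≠ 0 := by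
  have h1 := vdd_an.eventually_analyticAt
  have h2 : ∀ᶠ z in 𝓝 (1 : ℂ), z ∈ Complex.slitPlane :=
    Complex.isOpen_slitPlane.mem_nhds one_mem_slitPlane
  have h3 : ∀ᶠ z in 𝓝 (1 : ℂ), vdd z ≠ 0 := by
    have : ContinuousAt vdd 1 := vdd_an.continuousAt
    have := this.eventually_ne (by rw [vdd_one]; exact one_ne_zero)
    exact this
  filter_upwards [h1, h2, h3] with z a b c using ⟨a, b, c⟩

lemma vdd_g_ev : (fun z => vdd z + (z - 1) * deriv vdd z)
    =ᶠ[𝓝 (1 : ℂ)] (fun z => z⁻¹) := by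
  filter_upwards [vdd_ev] with z hz
  obtain ⟨ha, hs, -⟩ := hz
  have h1 : HasDerivAt (fun w => (w - 1) * vdd w)
      (1 * vdd z + (z - 1) * deriv vdd z) z :=
    ((hasDerivAt_id z).sub_const 1).mul ha.differentiableAt.hasDerivAt
  have h2 : HasDerivAt (fun w => (w - 1) * vdd w) z⁻¹ z := by
    have : (fun w => (w - 1) * vdd w) = Complex.log := funext vdd_eq
    rw [this]; exact Complex.hasDerivAt_log hs
  have := h1.unique h2
  linear_combination this

lemma vdd_deriv_one : deriv vdd 1 = -(1 / 2) := by
  have hg : HasDerivAt (fun z => vdd z + (z - 1) * deriv vdd z)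
      (deriv vdd 1 + (1 * deriv vdd 1 + (1 - 1) * deriv (deriv vdd) 1)) 1 :=
    (vdd_an.differentiableAt.hasDerivAt).add
      (((hasDerivAt_id 1).sub_const 1).mul
        (analyticAt_deriv' vdd_an).differentiableAt.hasDerivAt)
  have he : deriv (fun z => vdd z + (z - 1) * deriv vdd z) 1
      = deriv (fun z : ℂ => z⁻¹) 1 := vdd_g_ev.deriv_eq
  have h2 : deriv (fun z : ℂ => z⁻¹) 1 = -((1 : ℂ) ^ 2)⁻¹ := deriv_inv
  have := hg.deriv
  rw [he, h2] at this
  have h3 : (2 : ℂ) * deriv vdd 1 = -1 := by linear_combination -this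
  linear_combination h3 / 2

lemma vdd_h_ev : (fun z => 2 * deriv vdd z + (z - 1) * deriv (deriv vdd) z)
    =ᶠ[𝓝 (1 : ℂ)] (fun z => -(z ^ 2)⁻¹) := by
  have hderiv : deriv (fun z : ℂ => vdd z + (z - 1) * deriv vdd z)
      =ᶠ[𝓝 (1:ℂ)] deriv (fun z : ℂ => z⁻¹) := vdd_g_ev.deriv
  filter_upwards [vdd_ev.eventually_nhds, hderiv] with z hz hdz
  obtain ⟨ha, hs, -⟩ := hz.self_of_nhds
  have hz0 : z ≠ 0 := Complex.slitPlane_ne_zero hs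
  have h1 : HasDerivAt (fun w => vdd w + (w - 1) * deriv vdd w)
      (deriv vdd z + (1 * deriv vdd z + (z - 1) * deriv (deriv vdd) z)) z :=
    (ha.differentiableAt.hasDerivAt).add
      (((hasDerivAt_id z).sub_const 1).mul
        (analyticAt_deriv' ha).differentiableAt.hasDerivAt)
  have h2 : deriv (fun w : ℂ => w⁻¹) z = -(z ^ 2)⁻¹ := deriv_inv
  have := h1.deriv
  rw [hdz, h2] at this
  linear_combination -this

lemma vdd_deriv2_one : deriv (deriv vdd) 1 = 2 / 3 := by
  have hh : HasDerivAt (fun z => 2 * deriv vdd z + (z - 1) * deriv (deriv vdd) z)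
      (2 * deriv (deriv vdd) 1 +
        (1 * deriv (deriv vdd) 1 + (1 - 1) * deriv (deriv (deriv vdd)) 1)) 1 :=
    (((analyticAt_deriv' vdd_an).differentiableAt.hasDerivAt).const_mul 2).add
      (((hasDerivAt_id 1).sub_const 1).mul
        (analyticAt_deriv' (analyticAt_deriv' vdd_an)).differentiableAt.hasDerivAt)
  have he : deriv (fun z => 2 * deriv vdd z + (z - 1) * deriv (deriv vdd) z) 1
      = deriv (fun z : ℂ => -(z ^ 2)⁻¹) 1 := vdd_h_ev.deriv_eq
  have h2 : HasDerivAt (fun z : ℂ => -(z ^ 2)⁻¹)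
      (-(-(2 * (1:ℂ) ^ 1) / ((1:ℂ) ^ 2) ^ 2)) 1 :=
    (((hasDerivAt_pow 2 (1:ℂ)).inv (by norm_num))).neg
  have := hh.deriv
  rw [he, h2.deriv] at this
  have h3 : (3 : ℂ) * deriv (deriv vdd) 1 = 2 := by linear_combination -this
  linear_combination h3 / 3


/-- For `k = 2` and `M(s) = 1/(s^(α+1) (Log s)³)`, the residue of
`e^(st) M(s)` at `s = 1`, i.e. `lim_{s→1} (1/2!) d²/ds² [ e^{st} (s−1)³ M(s) ]`,
equals `(e^t/2) (t² − (2α−1) t + α²)`. -/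
theorem volterra_residue_k2 (α t : ℝ) :
    Tendsto
      (fun s : ℂ =>
        (1 / (2 : ℂ)) *
          iteratedDeriv 2
            (fun z : ℂ =>
              Complex.exp (z * t) * (z - 1) ^ 3 /
                (z ^ ((α : ℂ) + 1) * Complex.log z ^ 3)) s)
      (𝓝[≠] 1)
      (𝓝 (Complex.exp t / 2 *
        ((t : ℂ) ^ 2 - (2 * (α : ℂ) - 1) * t + (α : ℂ) ^ 2))) := by
  set c : ℂ := (α : ℂ) + 1 with hc
  set f : ℂ → ℂ := fun z =>
    Complex.exp (z * t) * (z - 1) ^ 3 / (z ^ c * Complex.log z ^ 3) with hfdef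
  set G : ℂ → ℂ := fun z => Complex.exp (z * t) / (z ^ c * vdd z ^ 3) with hGdef
  have hG : AnalyticAt ℂ G 1 := by
    refine (((analyticAt_id).mul analyticAt_const).cexp).div
      (((analyticAt_id).cpow analyticAt_const one_mem_slitPlane).mul (vdd_an.pow 3)) ?_
    simp [Complex.one_cpow, vdd_one]
  have hfG : ∀ᶠ z in 𝓝[≠] (1 : ℂ), iteratedDeriv 2 f z = iteratedDeriv 2 G z := by
    have hPP := vdd_ev.eventually_nhds
    filter_upwards [hPP.filter_mono nhdsWithin_le_nhds, self_mem_nhdsWithin]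
      with z hz (hz1 : z ≠ 1)
    have hfg' : f =ᶠ[𝓝 z] G := by
      filter_upwards [hz, isOpen_ne.mem_nhds hz1] with w hw (hw1 : w ≠ 1)
      obtain ⟨-, hs, hd0⟩ := hw
      have hw0 : w ≠ 0 := Complex.slitPlane_ne_zero hs
      have hlog : Complex.log w = (w - 1) * vdd w := (vdd_eq w).symm
      have h1 : w - 1 ≠ 0 := sub_ne_zero.mpr hw1
      have hcne : w ^ c ≠ 0 := by simp [Complex.cpow_eq_zero_iff, hw0]
      show Complex.exp (w * t) * (w - 1) ^ 3 / (w ^ c * Complex.log w ^ 3)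
          = Complex.exp (w * t) / (w ^ c * vdd w ^ 3)
      rw [hlog]
      field_simp
    exact hfg'.iteratedDeriv_eq 2
  set Φ : ℂ → ℂ := fun z =>
    Complex.exp (z * t) * ((t : ℂ) * (z ^ c * vdd z ^ 3) -
      (c * z ^ (c - 1) * vdd z ^ 3 + 3 * z ^ c * vdd z ^ 2 * deriv vdd z)) /
      (z ^ c * vdd z ^ 3) ^ 2 with hPhidef
  have hGat : ∀ z : ℂ, AnalyticAt ℂ vdd z → z ∈ Complex.slitPlane → vdd z ≠ 0 →
      HasDerivAt G (Φ z) z := by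
    intro z ha hs hd0
    have hz0 : z ≠ 0 := Complex.slitPlane_ne_zero hs
    have hE : HasDerivAt (fun w : ℂ => Complex.exp (w * t))
        (Complex.exp (z * t) * t) z := (hasDerivAt_mul_const (t:ℂ)).cexp
    have hP : HasDerivAt (fun w : ℂ => w ^ c) (c * z ^ (c - 1) * 1) z :=
      (hasDerivAt_id z).cpow_const hs
    have hd : HasDerivAt vdd (deriv vdd z) z := ha.differentiableAt.hasDerivAt
    have hD := hP.mul (hd.pow 3)
    have hden_ne : z ^ c * vdd z ^ 3 ≠ 0 := by
      simp [Complex.cpow_eq_zero_iff, hz0, hd0]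
    have := hE.div hD hden_ne
    refine this.congr_deriv ?_
    simp only [hPhidef, Pi.mul_apply, Pi.pow_apply]
    push_cast
    ring
  have hPhi : deriv G =ᶠ[𝓝 (1 : ℂ)] Φ := by
    filter_upwards [vdd_ev] with z hz
    obtain ⟨ha, hs, hd0⟩ := hz
    exact (hGat z ha hs hd0).deriv
  -- derivative of Φ at 1
  have hE : HasDerivAt (fun w : ℂ => Complex.exp (w * t))
      (Complex.exp ((1:ℂ) * t) * t) 1 := (hasDerivAt_mul_const (t:ℂ)).cexp
  have hP : HasDerivAt (fun w : ℂ => w ^ c) (c * (1:ℂ) ^ (c - 1) * 1) 1 :=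
    (hasDerivAt_id 1).cpow_const one_mem_slitPlane
  have hP' : HasDerivAt (fun w : ℂ => w ^ (c - 1))
      ((c - 1) * (1:ℂ) ^ (c - 1 - 1) * 1) 1 :=
    (hasDerivAt_id 1).cpow_const one_mem_slitPlane
  have hd : HasDerivAt vdd (deriv vdd 1) 1 := vdd_an.differentiableAt.hasDerivAt
  have hd' : HasDerivAt (deriv vdd) (deriv (deriv vdd) 1) 1 :=
    (analyticAt_deriv' vdd_an).differentiableAt.hasDerivAt
  have hD := hP.mul (hd.pow 3)
  have hinner := (hD.const_mul (t:ℂ)).sub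
    (((hP'.const_mul c).mul (hd.pow 3)).add
      (((hP.const_mul 3).mul (hd.pow 2)).mul hd'))
  have hden0 : ((1:ℂ) ^ c * vdd 1 ^ 3) ^ 2 ≠ 0 := by
    simp [Complex.one_cpow, vdd_one]
  have hPhi1 : HasDerivAt Φ _ 1 := (hE.mul hinner).div (hD.pow 2) hden0
  have hval : deriv (deriv G) 1
      = Complex.exp (t : ℂ) * ((t : ℂ) ^ 2 - (2 * (α : ℂ) - 1) * t + (α : ℂ) ^ 2) := by
    rw [hPhi.deriv_eq, hPhi1.deriv]
    simp only [Complex.one_cpow, vdd_one, vdd_deriv_one, vdd_deriv2_one, one_mul, mul_one,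
      one_pow, hc, Pi.mul_apply, Pi.pow_apply, Pi.sub_apply, Pi.add_apply]
    push_cast
    ring
  -- conclude
  have h2G : iteratedDeriv 2 G = deriv (deriv G) := by
    rw [iteratedDeriv_succ, iteratedDeriv_one]
  have hlim : Tendsto (fun s : ℂ => (1 / (2:ℂ)) * iteratedDeriv 2 G s) (𝓝[≠] (1:ℂ))
      (𝓝 (Complex.exp (t:ℂ) / 2 *
        ((t : ℂ) ^ 2 - (2 * (α : ℂ) - 1) * t + (α : ℂ) ^ 2))) := by
    have hcont : ContinuousAt (deriv (deriv G)) 1 :=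
      (analyticAt_deriv' (analyticAt_deriv' hG)).continuousAt
    have h1 : Tendsto (fun s : ℂ => (1 / (2:ℂ)) * deriv (deriv G) s) (𝓝 (1:ℂ))
        (𝓝 ((1 / (2:ℂ)) * deriv (deriv G) 1)) := (continuousAt_const.mul hcont).tendsto
    rw [hval] at h1
    have heq : (1 / (2:ℂ)) * (Complex.exp (t:ℂ) *
        ((t : ℂ) ^ 2 - (2 * (α : ℂ) - 1) * t + (α : ℂ) ^ 2))
        = Complex.exp (t:ℂ) / 2 *
        ((t : ℂ) ^ 2 - (2 * (α : ℂ) - 1) * t + (α : ℂ) ^ 2) := by ring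
    rw [heq] at h1
    have := h1.mono_left (nhdsWithin_le_nhds (s := {(1:ℂ)}ᶜ))
    simpa [h2G] using this
  refine hlim.congr' ?_
  filter_upwards [hfG] with z hz
  rw [hz]

end VolterraAux
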